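/- Let m_l, m_r be complex numbers with strictly positive imaginary parts, a ∈ ℝ nonzero, and G = -(a² m_r - m_l⁻¹)⁻¹ (denominator nonzero). Suppose the 2×2 matrix s with s_{ll} = 1 + 2i a² G Im(m_l), s_{rr} = 1 + 2i a² G Im(m_r), s_{lr} = s_{rl} = 2i a² G √(Im(m_l) Im(m_r)) satisfies |s_{lr}| = 1. Then Re(G) = 0. -/

import Mathlib

open Complex in
/-- If the scattering matrix s is unitary and |s_lr| = 1 (stationary
reflectionless), then Re G = 0 (measure theoretically reflectionless). -/
theorem stmt_11 (a : ℝ) (ha : a ≠ 0) (ml mr : ℂ)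
    (hml : 0 < ml.im) (hmr : 0 < mr.im)
    (hden : (a : ℂ) ^ 2 * mr - ml⁻¹ ≠ 0)
    (G : ℂ) (hG : G = -((a : ℂ) ^ 2 * mr - ml⁻¹)⁻¹)
    (s : Matrix (Fin 2) (Fin 2) ℂ)
    (hs : s = !![1 + 2 * I * (a : ℂ) ^ 2 * G * (ml.im : ℂ),
                 2 * I * (a : ℂ) ^ 2 * G * (Real.sqrt (ml.im * mr.im) : ℂ);
                 2 * I * (a : ℂ) ^ 2 * G * (Real.sqrt (ml.im * mr.im) : ℂ),
                 1 + 2 * I * (a : ℂ) ^ 2 * G * (mr.im : ℂ)])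
    (hunit : s.conjTranspose * s = 1)
    (hlr : ‖s 0 1‖ = 1) :
    G.re = 0 := by
  have h00 : (s.conjTranspose * s) 0 0 = 1 := by rw [hunit]; simp
  rw [Matrix.mul_apply, Fin.sum_univ_two] at h00
  simp only [Matrix.conjTranspose_apply] at h00
  have h10 : s 1 0 = s 0 1 := by rw [hs]; simp
  have habs : star (s 1 0) * s 1 0 = 1 := by
    rw [h10, RCLike.star_def, mul_comm, Complex.mul_conj]
    norm_cast
    rw [← Complex.sq_norm, hlr]; norm_num
  have hzero : star (s 0 0) * s 0 0 = 0 := by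
    have := h00
    rw [habs] at this
    linear_combination this
  have hs00 : s 0 0 = 0 := by
    rcases mul_eq_zero.mp hzero with h | h
    · exact star_eq_zero.mp h
    · exact h
  rw [hs] at hs00
  have hs00' : (1 : ℂ) + 2 * I * (a : ℂ) ^ 2 * G * (ml.im : ℂ) = 0 := by
    simpa using hs00
  rw [← Complex.ofReal_pow] at hs00'
  have him := congrArg Complex.im hs00'
  simp only [Complex.add_im, Complex.one_im, Complex.mul_im, Complex.mul_re,
    Complex.I_re, Complex.I_im, Complex.ofReal_re, Complex.ofReal_im,
    Complex.re_ofNat, Complex.im_ofNat, Complex.zero_im] at him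
  have hp : (0:ℝ) < a ^ 2 := by positivity
  nlinarith [mul_pos hp hml, him]
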